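/- In a complex inner product space, let r and s be vectors with ⟨r, s⟩ = ‖r‖² and ‖r‖ < ‖s‖. Define r* = α₀ r + (1 - α₀) s with α₀ = -‖s‖² / ⟨s, r - s⟩. Then r* is orthogonal to s and ‖r*‖ = ‖r‖ / sqrt(1 - (‖r‖/‖s‖)²). -/

import Mathlib

theorem stmt_17 {H : Type*} [NormedAddCommGroup H] [InnerProductSpace ℂ H]
    (r s : H) (hs : s ≠ 0) (hinner : inner ℂ r s = (‖r‖ ^ 2 : ℂ)) (hlt : ‖r‖ < ‖s‖) :
    let α₀ : ℂ := -(‖s‖ ^ 2 : ℂ) / inner ℂ s (r - s)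
    let rstar := α₀ • r + (1 - α₀) • s
    inner ℂ rstar s = (0 : ℂ) ∧
      ‖rstar‖ = ‖r‖ / Real.sqrt (1 - (‖r‖ / ‖s‖) ^ 2) := by
  intro α₀ rstar
  have hsr : (inner ℂ s r : ℂ) = (‖r‖ ^ 2 : ℂ) := by
    rw [← inner_conj_symm, hinner]
    simp
  have hss : (inner ℂ s s : ℂ) = (‖s‖ ^ 2 : ℂ) := by
    simp [inner_self_eq_norm_sq_to_K]
  have hrr : (inner ℂ r r : ℂ) = (‖r‖ ^ 2 : ℂ) := by
    simp [inner_self_eq_norm_sq_to_K]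
  have hden : (inner ℂ s (r - s) : ℂ) = (‖r‖ ^ 2 : ℂ) - (‖s‖ ^ 2 : ℂ) := by
    rw [inner_sub_right, hsr, hss]
  have hne : ((‖r‖ ^ 2 : ℂ) - (‖s‖ ^ 2 : ℂ)) ≠ 0 := by
    intro h
    have : (‖r‖ ^ 2 : ℝ) = (‖s‖ ^ 2 : ℝ) := by
      exact_mod_cast sub_eq_zero.mp h
    nlinarith [norm_nonneg r, norm_nonneg s]
  have hα : α₀ = -(‖s‖ ^ 2 : ℂ) / ((‖r‖ ^ 2 : ℂ) - (‖s‖ ^ 2 : ℂ)) := by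
    simp only [α₀, hden]
  have hαconj : (starRingEnd ℂ) α₀ = α₀ := by
    rw [hα]
    simp [map_div₀]
  have h1 : (inner ℂ rstar s : ℂ) = 0 := by
    simp only [rstar, inner_add_left, inner_smul_left, hinner, hss, map_sub, map_one, hαconj]
    rw [hα]
    field_simp
    ring
  refine ⟨h1, ?_⟩
  have h1' : (inner ℂ s rstar : ℂ) = 0 := by
    rw [← inner_conj_symm, h1, map_zero]
  have hrstarr : (inner ℂ rstar r : ℂ) = (‖r‖ ^ 2 : ℂ) := by
    simp only [rstar, inner_add_left, inner_smul_left, hrr, hsr, map_sub, map_one, hαconj]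
    ring
  have hkey : ((‖rstar‖ : ℂ)) ^ 2 = α₀ * (‖r‖ ^ 2 : ℂ) := by
    have : (inner ℂ rstar rstar : ℂ) = α₀ * (inner ℂ rstar r) + (1 - α₀) * (inner ℂ rstar s) := by
      simp only [rstar, inner_add_right, inner_smul_right]
    have hn : (inner ℂ rstar rstar : ℂ) = ((‖rstar‖ : ℂ)) ^ 2 := by
      exact_mod_cast inner_self_eq_norm_sq_to_K (𝕜 := ℂ) (x := rstar)
    rw [← hn, this, hrstarr, h1]
    ring
  have hpos : (0:ℝ) < ‖s‖ ^ 2 - ‖r‖ ^ 2 := by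
    nlinarith [norm_nonneg r, norm_nonneg s]
  have hkeyR : ‖rstar‖ ^ 2 = ‖s‖ ^ 2 * ‖r‖ ^ 2 / (‖s‖ ^ 2 - ‖r‖ ^ 2) := by
    have h2 : ((‖rstar‖ : ℂ)) ^ 2 = ((‖s‖ ^ 2 * ‖r‖ ^ 2 / (‖s‖ ^ 2 - ‖r‖ ^ 2) : ℝ) : ℂ) := by
      rw [hkey, hα]
      push_cast
      rw [div_mul_eq_mul_div, div_eq_div_iff hne (by exact_mod_cast hpos.ne')]
      ring
    exact_mod_cast h2
  have hspos : (0:ℝ) < ‖s‖ := lt_of_le_of_lt (norm_nonneg r) hlt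
  have hfracpos : (0:ℝ) < 1 - (‖r‖ / ‖s‖) ^ 2 := by
    have : (‖r‖ / ‖s‖) < 1 := (div_lt_one hspos).mpr hlt
    have h0 : (0:ℝ) ≤ ‖r‖ / ‖s‖ := div_nonneg (norm_nonneg r) hspos.le
    nlinarith
  have hRHSnn : (0:ℝ) ≤ ‖r‖ / Real.sqrt (1 - (‖r‖ / ‖s‖) ^ 2) :=
    div_nonneg (norm_nonneg r) (Real.sqrt_nonneg _)
  have hRHSsq : (‖r‖ / Real.sqrt (1 - (‖r‖ / ‖s‖) ^ 2)) ^ 2 = ‖s‖ ^ 2 * ‖r‖ ^ 2 / (‖s‖ ^ 2 - ‖r‖ ^ 2) := by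
    rw [div_pow, Real.sq_sqrt hfracpos.le]
    field_simp
  have : ‖rstar‖ ^ 2 = (‖r‖ / Real.sqrt (1 - (‖r‖ / ‖s‖) ^ 2)) ^ 2 := by
    rw [hkeyR, hRHSsq]
  have h3 := congrArg Real.sqrt this
  rwa [Real.sqrt_sq (norm_nonneg _), Real.sqrt_sq hRHSnn] at h3
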